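/- Define the real numbers z = sin(π/5)/sin(π/3), y = sin(7π/15)/sin(π/3), x = z − z·sin(π/30)/sin(3π/10), h = x·sin(3π/10), and h₁ = (y + 1)·sin(π/30) + z·sin(π/30). Then h₁/h = (√5 − 1)/2; in particular this ratio is irrational. -/

import Mathlib

open Real

lemma sin_pi_div_ten : Real.sin (π/10) = (Real.sqrt 5 - 1)/4 := by
  have h1 : Real.sin (π/10) = Real.cos (2*π/5) := by
    rw [show (2*π/5:ℝ) = π/2 - π/10 by ring, Real.cos_pi_div_two_sub]
  have h2 : Real.cos (2*π/5) = 2 * Real.cos (π/5)^2 - 1 := by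
    rw [show (2*π/5:ℝ) = 2*(π/5) by ring, Real.cos_two_mul]
  have h3 := Real.cos_pi_div_five
  have h5 : Real.sqrt 5 ^ 2 = 5 := Real.sq_sqrt (by norm_num)
  rw [h1, h2, h3]; nlinarith [h5]

lemma key : 2 * Real.sin (π/30) * (Real.sin (7*π/15) + Real.sin (π/3) + Real.sin (π/5))
    = 4 * Real.sin (π/10) * Real.sin (π/5) * (Real.sin (3*π/10) - Real.sin (π/30)) := by
  -- E1 : 2 s1 s14 = s2
  have E1 : 2 * Real.sin (π/30) * Real.sin (7*π/15) = Real.sin (π/15) := by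
    have h14 : Real.sin (7*π/15) = Real.cos (π/30) := by
      rw [show (7*π/15:ℝ) = π/2 - π/30 by ring, Real.sin_pi_div_two_sub]
    rw [h14, show (π/15:ℝ) = 2*(π/30) by ring, Real.sin_two_mul]
  -- E2 : 2 s1 s10 = cos(3π/10) - cos(11π/30) = sin(π/5) - sin(2π/15)
  have c9 : Real.cos (3*π/10) = Real.sin (π/5) := by
    rw [show (3*π/10:ℝ) = π/2 - π/5 by ring, Real.cos_pi_div_two_sub]
  have c11 : Real.cos (11*π/30) = Real.sin (2*π/15) := by
    rw [show (11*π/30:ℝ) = π/2 - 2*π/15 by ring, Real.cos_pi_div_two_sub]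
  have E2 : 2 * Real.sin (π/30) * Real.sin (π/3) = Real.sin (π/5) - Real.sin (2*π/15) := by
    rw [← c9, ← c11, show (3*π/10:ℝ) = π/3 - π/30 by ring,
      show (11*π/30:ℝ) = π/3 + π/30 by ring, Real.cos_sub, Real.cos_add]; ring
  -- E3 : 2 s1 s6 = cos(π/6) - cos(7π/30) = sin(π/3) - sin(4π/15)
  have c5 : Real.cos (π/6) = Real.sin (π/3) := by
    rw [show (π/6:ℝ) = π/2 - π/3 by ring, Real.cos_pi_div_two_sub]
  have c7 : Real.cos (7*π/30) = Real.sin (4*π/15) := by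
    rw [show (7*π/30:ℝ) = π/2 - 4*π/15 by ring, Real.cos_pi_div_two_sub]
  have E3 : 2 * Real.sin (π/30) * Real.sin (π/5) = Real.sin (π/3) - Real.sin (4*π/15) := by
    rw [← c5, ← c7, show (π/6:ℝ) = π/5 - π/30 by ring,
      show (7*π/30:ℝ) = π/5 + π/30 by ring, Real.cos_sub, Real.cos_add]; ring
  -- P : 2 s3 s6 = cos(π/10) - cos(3π/10)
  have P : 2 * Real.sin (π/10) * Real.sin (π/5) = Real.cos (π/10) - Real.cos (3*π/10) := by
    rw [show (π/10:ℝ) = π/5 - π/10 by ring] ; rw [show (3*π/10:ℝ) = π/5 + π/10 by ring,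
      Real.cos_sub, Real.cos_add]
    rw [show (π/5 - π/10 : ℝ) = π/10 by ring]; ring
  -- Q1 : 2 cos(π/10) sin(3π/10) = sin(2π/5) + sin(π/5)
  have Q1 : 2 * Real.cos (π/10) * Real.sin (3*π/10) = Real.sin (2*π/5) + Real.sin (π/5) := by
    rw [show (2*π/5:ℝ) = 3*π/10 + π/10 by ring, show (π/5:ℝ) = 3*π/10 - π/10 by ring,
      Real.sin_add, Real.sin_sub]; ring
  -- Q2 : 2 cos(3π/10) sin(3π/10) = sin(3π/5) = sin(2π/5)
  have Q2 : 2 * Real.cos (3*π/10) * Real.sin (3*π/10) = Real.sin (2*π/5) := by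
    have : Real.sin (3*π/5) = Real.sin (2*π/5) := by
      rw [show (3*π/5:ℝ) = π - 2*π/5 by ring, Real.sin_pi_sub]
    rw [← this, show (3*π/5:ℝ) = 2*(3*π/10) by ring, Real.sin_two_mul]; ring
  -- Q3 : 2 cos(π/10) sin(π/30) = sin(2π/15) - sin(π/15)
  have Q3 : 2 * Real.cos (π/10) * Real.sin (π/30) = Real.sin (2*π/15) - Real.sin (π/15) := by
    rw [show (2*π/15:ℝ) = π/10 + π/30 by ring, show (π/15:ℝ) = π/10 - π/30 by ring,
      Real.sin_add, Real.sin_sub]; ring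
  -- Q4 : 2 cos(3π/10) sin(π/30) = sin(π/3) - sin(4π/15)
  have Q4 : 2 * Real.cos (3*π/10) * Real.sin (π/30) = Real.sin (π/3) - Real.sin (4*π/15) := by
    rw [show (π/3:ℝ) = 3*π/10 + π/30 by ring, show (4*π/15:ℝ) = 3*π/10 - π/30 by ring,
      Real.sin_add, Real.sin_sub]; ring
  linear_combination E1 + E2 + E3 - 2*(Real.sin (3*π/10) - Real.sin (π/30)) * P - Q1 + Q2 + Q3 - Q4

theorem stmt_10 (z y x h h₁ : ℝ)
    (hz : z = Real.sin (π / 5) / Real.sin (π / 3))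
    (hy : y = Real.sin (7 * π / 15) / Real.sin (π / 3))
    (hx : x = z - z * Real.sin (π / 30) / Real.sin (3 * π / 10))
    (hh : h = x * Real.sin (3 * π / 10))
    (hh₁ : h₁ = (y + 1) * Real.sin (π / 30) + z * Real.sin (π / 30)) :
    h₁ / h = (Real.sqrt 5 - 1) / 2 ∧ Irrational (h₁ / h) := by
  have pi_pos := Real.pi_pos
  have hs10 : 0 < Real.sin (π/3) := Real.sin_pos_of_pos_of_lt_pi (by linarith) (by linarith)
  have hs9 : 0 < Real.sin (3*π/10) := Real.sin_pos_of_pos_of_lt_pi (by linarith) (by linarith)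
  have hs6 : 0 < Real.sin (π/5) := Real.sin_pos_of_pos_of_lt_pi (by linarith) (by linarith)
  have hlt : Real.sin (π/30) < Real.sin (3*π/10) :=
    Real.sin_lt_sin_of_lt_of_le_pi_div_two (by linarith) (by linarith) (by linarith)
  have hzpos : 0 < z := by rw [hz]; positivity
  have hh' : h = z * (Real.sin (3*π/10) - Real.sin (π/30)) := by
    rw [hh, hx, sub_mul, div_mul_cancel₀ _ (ne_of_gt hs9)]; ring
  have hne : h ≠ 0 := by
    rw [hh']; exact ne_of_gt (mul_pos hzpos (by linarith))
  have hz' : z * Real.sin (π/3) = Real.sin (π/5) := by rw [hz]; exact div_mul_cancel₀ _ (ne_of_gt hs10)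
  have hy' : (y + 1 + z) * Real.sin (π/3)
      = Real.sin (7*π/15) + Real.sin (π/3) + Real.sin (π/5) := by
    rw [hy, hz, add_mul, add_mul, div_mul_cancel₀ _ (ne_of_gt hs10),
      div_mul_cancel₀ _ (ne_of_gt hs10), one_mul]
  have hr : h₁ / h = (Real.sqrt 5 - 1) / 2 := by
    have h4 : Real.sqrt 5 - 1 = 4 * Real.sin (π/10) := by rw [sin_pi_div_ten]; ring
    rw [div_eq_div_iff hne (by norm_num : (2:ℝ) ≠ 0), h4, hh₁, hh']
    apply mul_right_cancel₀ (ne_of_gt hs10)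
    linear_combination key + 2 * Real.sin (π/30) * hy'
      - 4 * Real.sin (π/10) * (Real.sin (3*π/10) - Real.sin (π/30)) * hz'
  refine ⟨hr, hr ▸ ?_⟩
  have h5 : Irrational (Real.sqrt 5) := (by norm_num : Nat.Prime 5).irrational_sqrt
  have := (h5.sub_intCast 1).div_intCast (by norm_num : (2:ℤ) ≠ 0)
  simpa using this
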